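/- Let n be an odd positive integer divisible by 3, and let a be an integer with 0 ≤ a ≤ 11 and gcd(a,3) = 1. Then the number N_a of integers k with 1 ≤ k ≤ n, gcd(k,n) = 1, and k ≡ a (mod 12) satisfies |N_a − φ(n)/8| < 2^{ω(n)−1}. -/

import Mathlib

open Finset ArithmeticFunction
open scoped ArithmeticFunction.Moebius ArithmeticFunction.Omega

private lemma count_residue_card (m c : ℕ) (hc1 : 1 ≤ c) (hcm : c ≤ m) (n : ℕ) :
    ((Finset.Icc 1 n).filter (fun k => k % m = c % m)).card = (n + m - c) / m := by
  induction n with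
  | zero =>
    rw [show Finset.Icc 1 0 = ∅ from Finset.Icc_eq_empty (by omega)]
    rw [Finset.filter_empty, Finset.card_empty, Nat.div_eq_of_lt (by omega)]
  | succ n ih =>
    have h1 : Finset.Icc 1 (n + 1) = insert (n + 1) (Finset.Icc 1 n) := by
      ext x; simp [Finset.mem_Icc, Finset.mem_insert]; omega
    have hnm : n + 1 + m - c = (n + m - c) + 1 := by omega
    have hdvd : ((n + 1) % m = c % m) ↔ m ∣ (n + m - c + 1) := by
      have h2 : (c ≡ (n + 1 + m) [MOD m]) ↔ m ∣ (n + 1 + m - c) :=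
        Nat.modEq_iff_dvd' (by omega)
      have h3 : (n + 1 + m) % m = (n + 1) % m := Nat.add_mod_right _ _
      unfold Nat.ModEq at h2
      rw [h3] at h2
      rw [show n + m - c + 1 = n + 1 + m - c by omega] at *
      constructor
      · intro h; exact h2.mp h.symm
      · intro h; exact (h2.mpr h).symm
    rw [h1, Finset.filter_insert, hnm, Nat.succ_div]
    by_cases hd : (n + 1) % m = c % m
    · rw [if_pos hd, Finset.card_insert_of_notMem (by simp), ih, if_pos (hdvd.mp hd)]
    · rw [if_neg hd, ih, if_neg (fun h => hd (hdvd.mpr h)), add_zero]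

private lemma count_residue_bound (m c n : ℕ) (hm : 0 < m) (hc1 : 1 ≤ c) (hcm : c ≤ m) :
    |(((n + m - c) / m : ℕ) : ℚ) - (n : ℚ) / m| < 1 := by
  set q := (n + m - c) / m with hq
  set r := (n + m - c) % m with hr
  have hdm : m * q + r = n + m - c := Nat.div_add_mod _ _
  have hrm : r < m := Nat.mod_lt _ hm
  have enat : m * q + r + c = n + m := by omega
  have e : (m : ℚ) * q + r + c = n + m := by exact_mod_cast enat
  have hm' : (0 : ℚ) < m := by exact_mod_cast hm
  have h1 : ((q : ℚ) - n / m) = ((m : ℚ) * q - n) / m := by field_simp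
  rw [h1, abs_div, abs_of_pos hm', div_lt_one hm', abs_lt]
  have hrQ : (r : ℚ) < m := by exact_mod_cast hrm
  have hc1Q : (1 : ℚ) ≤ c := by exact_mod_cast hc1
  have hcmQ : (c : ℚ) ≤ m := by exact_mod_cast hcm
  constructor <;> linarith

private lemma squarefree_prod_primes {s : Finset ℕ} (hs : ∀ p ∈ s, p.Prime) :
    Squarefree (∏ p ∈ s, p) := by
  classical
  induction s using Finset.induction with
  | empty => simpa using squarefree_one
  | @insert p s hps ih =>
    rw [Finset.prod_insert hps]
    have hp := hs _ (Finset.mem_insert_self _ _)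
    have hcop : Nat.Coprime p (∏ q ∈ s, q) :=
      Nat.Coprime.prod_right fun q hq =>
        (Nat.coprime_primes hp (hs q (Finset.mem_insert_of_mem hq))).mpr
          (by rintro rfl; exact hps hq)
    exact (Nat.squarefree_mul hcop).mpr
      ⟨hp.squarefree, ih fun q hq => hs q (Finset.mem_insert_of_mem hq)⟩

private lemma moebius_prod_primes {s : Finset ℕ} (hs : ∀ p ∈ s, p.Prime) :
    μ (∏ p ∈ s, p) = (-1) ^ s.card := by
  have hsf := squarefree_prod_primes hs
  rw [moebius_apply_of_squarefree hsf]
  congr 1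
  have hpf : (∏ p ∈ s, p).primeFactors = s := Nat.primeFactors_prod hs
  have h1 : Ω (∏ p ∈ s, p) = (∏ p ∈ s, p).primeFactorsList.length := cardFactors_apply
  rw [h1, ← List.toFinset_card_of_nodup hsf.nodup_primeFactorsList]
  rw [show (∏ p ∈ s, p).primeFactorsList.toFinset = (∏ p ∈ s, p).primeFactors from rfl, hpf]

private lemma sum_moebius_divisors (m : ℕ) :
    ∑ d ∈ m.divisors, ((μ d : ℤ) : ℚ) = if m = 1 then 1 else 0 := by
  have h := congrArg (fun f : ArithmeticFunction ℤ => f m) moebius_mul_coe_zeta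
  simp only [coe_mul_zeta_apply, one_apply] at h
  have h2 : ∑ d ∈ m.divisors, ((μ d : ℤ) : ℚ) = ((∑ d ∈ m.divisors, μ d : ℤ) : ℚ) := by
    push_cast; rfl
  rw [h2, h]
  split_ifs <;> simp

theorem coprime_equidistribution_mod_twelve (n : ℕ) (hn : 0 < n) (hodd : Odd n)
    (h3 : 3 ∣ n) (a : ℕ) (ha : a ≤ 11) (ha3 : Nat.gcd a 3 = 1) :
    abs ((((Finset.Icc 1 n).filter (fun k => Nat.gcd k n = 1 ∧ k % 12 = a)).card : ℚ)
        - (Nat.totient n : ℚ) / 8)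
      < 2 ^ (n.primeFactors.card - 1) := by
  classical
  have hn0 : n ≠ 0 := hn.ne'
  have h3a : ¬ (3 ∣ a) := by
    intro h
    have h1 : (3 : ℕ) ∣ Nat.gcd a 3 := Nat.dvd_gcd h dvd_rfl
    rw [ha3] at h1; omega
  have ha1 : 1 ≤ a := by
    rcases Nat.eq_zero_or_pos a with rfl | h
    · exact absurd ⟨0, rfl⟩ h3a
    · exact h
  have h3P : 3 ∈ n.primeFactors := Nat.mem_primeFactors.mpr ⟨Nat.prime_three, h3, hn0⟩
  set P : Finset ℕ := n.primeFactors with hP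
  set D : Finset ℕ := n.divisors.filter (fun d => Squarefree d ∧ ¬ (3 ∣ d)) with hD
  set B : ℕ → ℕ := fun d => ((Finset.Icc 1 n).filter (fun k => d ∣ k ∧ k % 12 = a)).card with hB
  -- Step A: Möbius expansion
  have stepA : (((Finset.Icc 1 n).filter (fun k => Nat.gcd k n = 1 ∧ k % 12 = a)).card : ℚ)
      = ∑ d ∈ n.divisors, ((μ d : ℤ) : ℚ) * (B d : ℚ) := by
    rw [Finset.card_filter]
    push_cast
    have inner : ∀ k ∈ Finset.Icc 1 n,
        (if Nat.gcd k n = 1 ∧ k % 12 = a then (1 : ℚ) else 0)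
          = ∑ d ∈ n.divisors, (if d ∣ k ∧ k % 12 = a then ((μ d : ℤ) : ℚ) else 0) := by
      intro k hk
      by_cases h12 : k % 12 = a
      · simp only [h12, and_true]
        have e1 : ∑ d ∈ n.divisors, (if d ∣ k then ((μ d : ℤ) : ℚ) else 0)
            = ∑ d ∈ (Nat.gcd k n).divisors, ((μ d : ℤ) : ℚ) := by
          rw [← Finset.sum_filter]
          congr 1
          ext d
          simp only [Finset.mem_filter, Nat.mem_divisors, Nat.dvd_gcd_iff]
          constructor
          · rintro ⟨⟨hdn, -⟩, hdk⟩
            exact ⟨⟨hdk, hdn⟩, by simp [Nat.gcd_eq_zero_iff, hn0]⟩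
          · rintro ⟨⟨hdk, hdn⟩, -⟩
            exact ⟨⟨hdn, hn0⟩, hdk⟩
        rw [e1, sum_moebius_divisors]
      · simp only [h12, and_false, if_false]
        rw [Finset.sum_const_zero.symm]
        exact Finset.sum_congr rfl (fun d _ => by simp)
    rw [Finset.sum_congr rfl inner, Finset.sum_comm]
    refine Finset.sum_congr rfl (fun d _ => ?_)
    rw [← Finset.sum_filter, Finset.sum_const, nsmul_eq_mul, mul_comm]
  -- Step B : restrict the sum to D
  have stepB : ∑ d ∈ n.divisors, ((μ d : ℤ) : ℚ) * (B d : ℚ)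
      = ∑ d ∈ D, ((μ d : ℤ) : ℚ) * (B d : ℚ) := by
    refine (Finset.sum_subset (Finset.filter_subset _ _) ?_).symm
    intro d hdiv hnD
    simp only [Finset.mem_filter] at hnD
    simp only [hdiv, true_and] at hnD
    by_cases hsf : Squarefree d
    · have h3d : 3 ∣ d := by tauto
      have : B d = 0 := by
        simp only [hB]
        rw [Finset.card_eq_zero, Finset.filter_eq_empty_iff]
        rintro k - ⟨hdk, hk12⟩
        have h3k : 3 ∣ k := dvd_trans h3d hdk
        have : k % 3 = a % 3 := by
          have : k % 12 % 3 = k % 3 := Nat.mod_mod_of_dvd k (by norm_num)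
          omega
        omega
      simp [this]
    · simp [moebius_eq_zero_of_not_squarefree hsf]
  -- Step C: bound for each divisor in D
  have stepC : ∀ d ∈ D, |(B d : ℚ) - (n : ℚ) / (12 * d)| < 1 := by
    intro d hd
    rw [hD, Finset.mem_filter, Nat.mem_divisors] at hd
    obtain ⟨⟨hdn, -⟩, hsf, h3d⟩ := hd
    have hd0 : d ≠ 0 := fun h => hn0 (by simpa [h] using hdn)
    have hn2 : n % 2 = 1 := Nat.odd_iff.mp hodd
    have h2d : ¬ (2 ∣ d) := by
      intro h2
      have h2n : (2 : ℕ) ∣ n := h2.trans hdn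
      omega
    have hdodd : Odd d := Nat.odd_iff.mpr (by omega)
    have h4c : Nat.Coprime 4 d := by
      have h2c : Nat.Coprime 2 d := Nat.coprime_two_left.mpr hdodd
      have := Nat.Coprime.pow_left 2 h2c
      simpa using this
    have h3c : Nat.Coprime 3 d := (Nat.Prime.coprime_iff_not_dvd Nat.prime_three).mpr h3d
    have hcop : Nat.Coprime 12 d := by
      have := Nat.Coprime.mul h4c h3c
      simpa using this
    set c : ℕ := (Nat.chineseRemainder hcop a 0 : ℕ) with hc
    obtain ⟨hca, hc0⟩ := (Nat.chineseRemainder hcop a 0).2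
    have hclt : c < 12 * d := Nat.chineseRemainder_lt_mul hcop a 0 (by norm_num) hd0
    have hc12 : c % 12 = a := by
      have h' : c % 12 = a % 12 := hca
      rwa [Nat.mod_eq_of_lt (show a < 12 by omega)] at h'
    have hcd : c % d = 0 := by
      have : c % d = 0 % d := hc0
      simpa using this
    have hc1 : 1 ≤ c := Nat.pos_of_ne_zero fun h0 => by rw [h0] at hc12; omega
    have hpred : ∀ k, (d ∣ k ∧ k % 12 = a) ↔ (k % (12 * d) = c % (12 * d)) := by
      intro k
      rw [show (k % (12 * d) = c % (12 * d)) ↔ (k ≡ c [MOD 12 * d]) from Iff.rfl]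
      rw [← Nat.modEq_and_modEq_iff_modEq_mul hcop]
      have e1 : (k ≡ c [MOD 12]) ↔ k % 12 = a := by
        unfold Nat.ModEq; rw [hc12]
      have e2 : (k ≡ c [MOD d]) ↔ d ∣ k := by
        unfold Nat.ModEq; rw [hcd]; exact Nat.dvd_iff_mod_eq_zero.symm
      rw [e1, e2]; tauto
    have hBcard : B d = (n + 12 * d - c) / (12 * d) := by
      simp only [hB]
      rw [show ((Finset.Icc 1 n).filter (fun k => d ∣ k ∧ k % 12 = a))
          = ((Finset.Icc 1 n).filter (fun k => k % (12 * d) = c % (12 * d))) from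
        Finset.filter_congr (fun k _ => by rw [hpred k])]
      exact count_residue_card (12 * d) c hc1 (le_of_lt hclt) n
    rw [hBcard]
    have := count_residue_bound (12 * d) c n (by positivity) hc1 (le_of_lt hclt)
    convert this using 3
    push_cast; ring
  -- Step D: main term
  have stepD : ∑ d ∈ D, ((μ d : ℤ) : ℚ) * ((n : ℚ) / (12 * d)) = (Nat.totient n : ℚ) / 8 := by
    have hbij : ∑ d ∈ D, ((μ d : ℤ) : ℚ) * ((n : ℚ) / (12 * d))
        = ∑ s ∈ (P.erase 3).powerset,
            ((μ (∏ p ∈ s, p) : ℤ) : ℚ) * ((n : ℚ) / (12 * (∏ p ∈ s, p))) := by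
      refine Finset.sum_nbij' (fun d => d.primeFactors) (fun s => ∏ p ∈ s, p) ?_ ?_ ?_ ?_ ?_
      · intro d hd
        rw [hD, Finset.mem_filter, Nat.mem_divisors] at hd
        obtain ⟨⟨hdn, -⟩, hsf, h3d⟩ := hd
        rw [Finset.mem_powerset]
        intro p hp
        rw [Finset.mem_erase]
        refine ⟨?_, Nat.primeFactors_mono hdn hn0 hp⟩
        rintro rfl
        exact h3d (Nat.dvd_of_mem_primeFactors hp)
      · intro s hs
        rw [Finset.mem_powerset] at hs
        have hsP : ∀ p ∈ s, p.Prime := fun p hp =>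
          Nat.prime_of_mem_primeFactors (Finset.mem_of_mem_erase (hs hp))
        rw [hD, Finset.mem_filter, Nat.mem_divisors]
        refine ⟨⟨?_, hn0⟩, squarefree_prod_primes hsP, ?_⟩
        · calc (∏ p ∈ s, p) ∣ ∏ p ∈ P, p :=
                Finset.prod_dvd_prod_of_subset _ _ _ (hs.trans (Finset.erase_subset _ _))
            _ ∣ n := Nat.prod_primeFactors_dvd n
        · intro h3dvd
          have := (Nat.prime_three.prime.dvd_finset_prod_iff _).mp h3dvd
          obtain ⟨q, hq, h3q⟩ := this
          have : 3 = q := ((Nat.prime_dvd_prime_iff_eq Nat.prime_three (hsP q hq)).mp h3q)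
          subst this
          exact Finset.notMem_erase 3 _ (hs hq)
      · intro d hd
        rw [hD, Finset.mem_filter] at hd
        exact Nat.prod_primeFactors_of_squarefree hd.2.1
      · intro s hs
        rw [Finset.mem_powerset] at hs
        exact Nat.primeFactors_prod (fun p hp =>
          Nat.prime_of_mem_primeFactors (Finset.mem_of_mem_erase (hs hp)))
      · intro d hd
        rw [hD, Finset.mem_filter] at hd
        rw [Nat.prod_primeFactors_of_squarefree hd.2.1]
    rw [hbij]
    have hterm : ∀ s ∈ (P.erase 3).powerset,
        ((μ (∏ p ∈ s, p) : ℤ) : ℚ) * ((n : ℚ) / (12 * (∏ p ∈ s, p)))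
          = ((n : ℚ) / 12) * ∏ p ∈ s, (-(p : ℚ)⁻¹) := by
      intro s hs
      rw [Finset.mem_powerset] at hs
      have hsP : ∀ p ∈ s, p.Prime := fun p hp =>
        Nat.prime_of_mem_primeFactors (Finset.mem_of_mem_erase (hs hp))
      rw [moebius_prod_primes hsP]
      have hppos : ∀ p ∈ s, (0 : ℚ) < (p : ℚ) := fun p hp => by
        exact_mod_cast (hsP p hp).pos
      have hprod0 : (0 : ℚ) < ∏ p ∈ s, (p : ℚ) := Finset.prod_pos hppos
      have hcast : ((∏ p ∈ s, p : ℕ) : ℚ) = ∏ p ∈ s, (p : ℚ) := by push_cast; rfl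
      rw [hcast]
      rw [show ∏ p ∈ s, (-(p : ℚ)⁻¹) = ∏ p ∈ s, ((-1) * (p : ℚ)⁻¹) by
        refine Finset.prod_congr rfl fun p _ => by ring]
      rw [Finset.prod_mul_distrib, Finset.prod_const, Finset.prod_inv_distrib]
      push_cast
      field_simp
    rw [Finset.sum_congr rfl hterm, ← Finset.mul_sum]
    have hexp : ∑ s ∈ (P.erase 3).powerset, ∏ p ∈ s, (-(p : ℚ)⁻¹)
        = ∏ p ∈ P.erase 3, (1 - (p : ℚ)⁻¹) := by
      have h : ∏ p ∈ P.erase 3, ((-(p : ℚ)⁻¹) + 1)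
          = ∑ t ∈ (P.erase 3).powerset, ∏ p ∈ t, (-(p : ℚ)⁻¹) := by
        rw [Finset.prod_add]
        exact Finset.sum_congr rfl fun t ht => by rw [Finset.prod_const_one, mul_one]
      rw [← h]
      exact Finset.prod_congr rfl fun p _ => by ring
    rw [hexp]
    have hphi : (Nat.totient n : ℚ) = (n : ℚ) * ∏ p ∈ P, (1 - (p : ℚ)⁻¹) :=
      Nat.totient_eq_mul_prod_factors n
    rw [← Finset.mul_prod_erase P _ h3P] at hphi
    rw [hphi]
    ring
  -- Step E: cardinality of D
  have stepE : D.card = 2 ^ (P.card - 1) := by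
    have h1 : D.card = (P.erase 3).powerset.card := by
      refine Finset.card_nbij' (fun d => d.primeFactors) (fun s => ∏ p ∈ s, p) ?_ ?_ ?_ ?_
      · intro d hd
        rw [Finset.mem_coe, Finset.mem_filter, Nat.mem_divisors] at hd
        obtain ⟨⟨hdn, -⟩, hsf, h3d⟩ := hd
        rw [Finset.mem_coe, Finset.mem_powerset]
        intro p hp
        rw [Finset.mem_erase]
        refine ⟨?_, Nat.primeFactors_mono hdn hn0 hp⟩
        rintro rfl
        exact h3d (Nat.dvd_of_mem_primeFactors hp)
      · intro s hs
        rw [Finset.mem_coe, Finset.mem_powerset] at hs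
        have hsP : ∀ p ∈ s, p.Prime := fun p hp =>
          Nat.prime_of_mem_primeFactors (Finset.mem_of_mem_erase (hs hp))
        rw [Finset.mem_coe, hD, Finset.mem_filter, Nat.mem_divisors]
        refine ⟨⟨?_, hn0⟩, squarefree_prod_primes hsP, ?_⟩
        · calc (∏ p ∈ s, p) ∣ ∏ p ∈ P, p :=
                Finset.prod_dvd_prod_of_subset _ _ _ (hs.trans (Finset.erase_subset _ _))
            _ ∣ n := Nat.prod_primeFactors_dvd n
        · intro h3dvd
          obtain ⟨q, hq, h3q⟩ := (Nat.prime_three.prime.dvd_finset_prod_iff _).mp h3dvd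
          have : 3 = q := ((Nat.prime_dvd_prime_iff_eq Nat.prime_three (hsP q hq)).mp h3q)
          subst this
          exact Finset.notMem_erase 3 _ (hs hq)
      · intro d hd
        rw [Finset.mem_coe, Finset.mem_filter] at hd
        exact Nat.prod_primeFactors_of_squarefree hd.2.1
      · intro s hs
        rw [Finset.mem_coe, Finset.mem_powerset] at hs
        exact Nat.primeFactors_prod (fun p hp =>
          Nat.prime_of_mem_primeFactors (Finset.mem_of_mem_erase (hs hp)))
    rw [h1, Finset.card_powerset, Finset.card_erase_of_mem h3P]
  -- D is nonempty
  have hDne : D.Nonempty := by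
    refine ⟨1, ?_⟩
    rw [hD, Finset.mem_filter, Nat.mem_divisors]
    exact ⟨⟨one_dvd n, hn0⟩, squarefree_one, by omega⟩
  -- Assemble
  rw [stepA, stepB, ← stepD, ← Finset.sum_sub_distrib]
  have habs : |∑ d ∈ D, (((μ d : ℤ) : ℚ) * (B d : ℚ) - ((μ d : ℤ) : ℚ) * ((n : ℚ) / (12 * d)))|
      ≤ ∑ d ∈ D, |((μ d : ℤ) : ℚ)| * |(B d : ℚ) - (n : ℚ) / (12 * d)| := by
    refine (Finset.abs_sum_le_sum_abs _ _).trans ?_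
    refine le_of_eq (Finset.sum_congr rfl fun d _ => ?_)
    rw [← mul_sub, abs_mul]
  refine lt_of_le_of_lt habs ?_
  have hlt : ∑ d ∈ D, |((μ d : ℤ) : ℚ)| * |(B d : ℚ) - (n : ℚ) / (12 * d)|
      < ∑ d ∈ D, (1 : ℚ) := by
    refine Finset.sum_lt_sum_of_nonempty hDne fun d hd => ?_
    have hsf : Squarefree d := by
      rw [hD, Finset.mem_filter] at hd; exact hd.2.1
    have hmu : |((μ d : ℤ) : ℚ)| = 1 := by
      have := abs_moebius_eq_one_of_squarefree hsf
      rw [← Int.cast_abs, this]; norm_num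
    rw [hmu, one_mul]
    exact stepC d hd
  refine lt_of_lt_of_le hlt ?_
  rw [Finset.sum_const, nsmul_eq_mul, mul_one, stepE]
  push_cast
  rfl
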